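/- Let (X, →) be a transition system, let ≤ be a quasi-ordering on X that is monotone with respect to →, and let x, y ∈ X. Then y is NOT coverable from x (i.e., there is no y' with y ≤ y' and x →* y') if, and only if, there exists a downward closed set D ⊆ X such that ↓Post(D) ⊆ D, x ∈ D and y ∉ D. -/
import Mathlib


/-- Downward closure of a set under a quasi-ordering. -/
def downcl {X : Type*} (le : X → X → Prop) (A : Set X) : Set X :=
  {x | ∃ a ∈ A, le x a}

/-- Immediate successors of a set of states. -/
def post {X : Type*} (step : X → X → Prop) (A : Set X) : Set X :=
  {y | ∃ x ∈ A, step x y}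

/-- Monotonicity extends to the reflexive-transitive closure. -/
lemma mono_rt {X : Type*} (step le : X → X → Prop)
    (htrans : ∀ x y z, le x y → le y z → le x z)
    (hmono : ∀ x y x', step x y → le x x' →
      ∃ y', le y y' ∧ Relation.ReflTransGen step x' y')
    {z w a : X} (h : Relation.ReflTransGen step z w) (hle : le z a) :
    ∃ w', le w w' ∧ Relation.ReflTransGen step a w' := by
  induction h with
  | refl => exact ⟨a, hle, Relation.ReflTransGen.refl⟩
  | tail hzc hcw ih =>
    obtain ⟨c', hc', hac'⟩ := ih
    obtain ⟨w', hw', hc'w'⟩ := hmono _ _ _ hcw hc'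
    exact ⟨w', hw', hac'.trans hc'w'⟩

/-- In a monotone quasi-ordered transition system, `y` is not
coverable from `x` iff there is a downward closed inductive invariant `D`
with `↓Post(D) ⊆ D`, `x ∈ D` and `y ∉ D`. -/
theorem stmt_4 {X : Type*} (step le : X → X → Prop)
    (hrefl : ∀ x, le x x)
    (htrans : ∀ x y z, le x y → le y z → le x z)
    (hmono : ∀ x y x', step x y → le x x' →
      ∃ y', le y y' ∧ Relation.ReflTransGen step x' y')
    (x y : X) :
    (¬ ∃ y', le y y' ∧ Relation.ReflTransGen step x y') ↔
    ∃ D : Set X, D = downcl le D ∧ downcl le (post step D) ⊆ D ∧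
      x ∈ D ∧ y ∉ D := by
  constructor
  · intro hnc
    refine ⟨{z | ¬ ∃ y', le y y' ∧ Relation.ReflTransGen step z y'}, ?_, ?_, hnc, ?_⟩
    · ext z
      constructor
      · intro hz
        exact ⟨z, hz, hrefl z⟩
      · rintro ⟨a, ha, hza⟩ ⟨y', hy', hzy'⟩
        obtain ⟨y'', hy'', hay''⟩ := mono_rt step le htrans hmono hzy' hza
        exact ha ⟨y'', htrans _ _ _ hy' hy'', hay''⟩
    · rintro w ⟨b, ⟨d, hd, hdb⟩, hwb⟩ ⟨y', hy', hwy'⟩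
      obtain ⟨y'', hy'', hby''⟩ := mono_rt step le htrans hmono hwy' hwb
      exact hd ⟨y'', htrans _ _ _ hy' hy'',
        (Relation.ReflTransGen.single hdb).trans hby''⟩
    · intro h
      exact h ⟨y, hrefl y, Relation.ReflTransGen.refl⟩
  · rintro ⟨D, hdc, hinv, hx, hy⟩ ⟨y', hy', hxy'⟩
    have hreach : ∀ z, Relation.ReflTransGen step x z → z ∈ D := by
      intro z hz
      induction hz with
      | refl => exact hx
      | tail hac hcb ih => exact hinv ⟨_, ⟨_, ih, hcb⟩, hrefl _⟩
    exact hy (hdc ▸ ⟨y', hreach y' hxy', hy'⟩)
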